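/- Sign conservation equation: In the data center model, let d and d' be two policies agreeing in all components except at index j with d_{n,j} ≠ d'_{n,j}, both in {0,...,j}. Then π^{(d')}(n,j)[G^{(d)}(n,j) + c] = π^{(d)}(n,j)[G^{(d')}(n,j) + c], and consequently (since the stationary probabilities are positive) the quantities G^{(d)}(n,j) + c and G^{(d')}(n,j) + c have the same sign: (G^{(d)}(n,j)+c)/(G^{(d')}(n,j)+c) = π^{(d)}(n,j)/π^{(d')}(n,j) > 0 whenever G^{(d')}(n,j)+c ≠ 0. -/

import Mathlib

open Finset

/-- Death rate of the data-center birth-death chain at state index `k`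
(states `0..n` are `(k,0)`; states `n+1..n+m` are `(n, k-n)`). -/
noncomputable def dcDeath (n : ℕ) (μ1 μ2 : ℝ) (d : ℕ → ℕ) (k : ℕ) : ℝ :=
  if k ≤ n then (k : ℝ) * μ1
  else (n : ℝ) * μ1 + (min (d (k - n)) (k - n) : ℝ) * μ2

/-- Policy-dependent generator of the data-center birth-death chain. -/
noncomputable def dcGen (n m : ℕ) (lam μ1 μ2 : ℝ) (d : ℕ → ℕ) (k l : ℕ) : ℝ :=
  if l = k + 1 then lam
  else if l + 1 = k then dcDeath n μ1 μ2 d k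
  else if l = k then -((if k < n + m then lam else 0) + dcDeath n μ1 μ2 d k)
  else 0

/-- `π` is a stationary probability vector for the policy-`d` chain. -/
def dcStationary (n m : ℕ) (lam μ1 μ2 : ℝ) (d : ℕ → ℕ) (π : ℕ → ℝ) : Prop :=
  (∀ l ∈ Finset.range (n + m + 1),
    ∑ k ∈ Finset.range (n + m + 1), π k * dcGen n m lam μ1 μ2 d k l = 0) ∧
  (∑ k ∈ Finset.range (n + m + 1), π k = 1) ∧
  (∀ k ∈ Finset.range (n + m + 1), 0 ≤ π k)

/-- Reward (profit rate) function of the data center at state index `k`. -/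
noncomputable def dcReward (n m : ℕ) (lam μ1 μ2 R P1W P2W P2S C1 C21 C22 C3 C4 : ℝ)
    (d : ℕ → ℕ) (k : ℕ) : ℝ :=
  if k ≤ n then
    R * ((k : ℝ) * μ1) - ((n : ℝ) * P1W + (m : ℝ) * P2S) * C1 - (k : ℝ) * C21
  else
    R * ((n : ℝ) * μ1 + (min (k - n) (d (k - n)) : ℝ) * μ2)
      - ((n : ℝ) * P1W + (d (k - n) : ℝ) * P2W + ((m : ℝ) - (d (k - n) : ℝ)) * P2S) * C1
      - ((n : ℝ) * C21 + ((k - n : ℕ) : ℝ) * C22)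
      - (n : ℝ) * μ1 * C3
      - (if k - n = m then lam * C4 else 0)

/-- `g` solves the Poisson equation `B^{(d)} g = η e - f` for the policy-`d` chain. -/
def dcPoisson (n m : ℕ) (lam μ1 μ2 : ℝ) (d : ℕ → ℕ) (f : ℕ → ℝ) (η : ℝ)
    (g : ℕ → ℝ) : Prop :=
  ∀ k ∈ Finset.range (n + m + 1),
    ∑ l ∈ Finset.range (n + m + 1), dcGen n m lam μ1 μ2 d k l * g l = η - f k


lemma sum_range_single (N a : ℕ) (ha : a < N) (φ : ℕ → ℝ)
    (h : ∀ k, k < N → k ≠ a → φ k = 0) :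
    ∑ k ∈ Finset.range N, φ k = φ a := by
  rw [← Finset.sum_subset (s₁ := {a}) (by simpa using ha)
    (fun x hx hx' => h x (Finset.mem_range.1 hx) (by simpa using hx'))]
  simp

lemma sum_range_pair (N a b : ℕ) (hab : a ≠ b) (ha : a < N) (hb : b < N) (φ : ℕ → ℝ)
    (h : ∀ k, k < N → k ≠ a → k ≠ b → φ k = 0) :
    ∑ k ∈ Finset.range N, φ k = φ a + φ b := by
  rw [← Finset.sum_subset (s₁ := {a, b})
    (by intro x hx; simp at hx; rcases hx with rfl|rfl <;> simpa)
    (fun x hx hx' => by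
      simp at hx'
      exact h x (Finset.mem_range.1 hx) hx'.1 hx'.2)]
  rw [Finset.sum_pair hab]

lemma sum_range_triple (N a b c : ℕ) (hab : a ≠ b) (hac : a ≠ c) (hbc : b ≠ c)
    (ha : a < N) (hb : b < N) (hc : c < N) (φ : ℕ → ℝ)
    (h : ∀ k, k < N → k ≠ a → k ≠ b → k ≠ c → φ k = 0) :
    ∑ k ∈ Finset.range N, φ k = φ a + φ b + φ c := by
  rw [← Finset.sum_subset (s₁ := {a, b, c})
    (by intro x hx; simp at hx; rcases hx with rfl|rfl|rfl <;> simpa)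
    (fun x hx hx' => by
      simp at hx'
      exact h x (Finset.mem_range.1 hx) hx'.1 hx'.2.1 hx'.2.2)]
  rw [Finset.sum_insert (by simp [hab, hac]), Finset.sum_pair hbc, add_assoc]

lemma dcDeath_zero (n : ℕ) (μ1 μ2 : ℝ) (d : ℕ → ℕ) :
    dcDeath n μ1 μ2 d 0 = 0 := by
  simp [dcDeath]

lemma dcDeath_pos (n : ℕ) (hn : 1 ≤ n) (μ1 μ2 : ℝ) (hμ1 : 0 < μ1) (hμ2 : 0 < μ2)
    (d : ℕ → ℕ) (k : ℕ) (hk : 1 ≤ k) : 0 < dcDeath n μ1 μ2 d k := by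
  unfold dcDeath
  split
  · have h1 : (1 : ℝ) ≤ (k : ℝ) := by exact_mod_cast hk
    nlinarith
  · rename_i h
    have h1 : (1 : ℝ) ≤ (n : ℝ) := by exact_mod_cast hn
    have hnk : (n : ℝ) ≤ (k : ℝ) := by exact_mod_cast (by omega : n ≤ k)
    have h2 : (0:ℝ) ≤ (min (d (k - n)) (k - n) : ℝ) * μ2 :=
      mul_nonneg (le_min (Nat.cast_nonneg _) (by linarith)) hμ2.le
    nlinarith

lemma dcStationary_cut (n m : ℕ) (hn : 1 ≤ n) (hm : 1 ≤ m)
    (lam μ1 μ2 : ℝ) (hlam : 0 < lam) (hμ1 : 0 < μ1) (hμ2 : 0 < μ2)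
    (d : ℕ → ℕ) (π : ℕ → ℝ) (hπ : dcStationary n m lam μ1 μ2 d π) :
    ∀ l, l < n + m → π (l + 1) * dcDeath n μ1 μ2 d (l + 1) = π l * lam := by
  intro l
  induction l with
  | zero =>
    intro _
    have h0 := hπ.1 0 (by simp)
    rw [sum_range_pair (n + m + 1) 0 1 (by omega) (by omega) (by omega)
      (fun k => π k * dcGen n m lam μ1 μ2 d k 0)
      (fun k hk hk0 hk1 => by
        show π k * dcGen n m lam μ1 μ2 d k 0 = 0
        unfold dcGen
        rw [if_neg (by omega), if_neg (by omega), if_neg (by omega), mul_zero])] at h0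
    unfold dcGen at h0
    rw [if_neg (by omega), if_neg (by omega), if_pos rfl, if_pos (by omega)] at h0
    rw [if_neg (by omega), if_pos (by omega)] at h0
    rw [dcDeath_zero] at h0
    linarith
  | succ l ih =>
    intro hl
    have ihv := ih (by omega)
    have h0 := hπ.1 (l + 1) (by simp; omega)
    rw [sum_range_triple (n + m + 1) l (l+1) (l+2) (by omega) (by omega) (by omega)
      (by omega) (by omega) (by omega)
      (fun k => π k * dcGen n m lam μ1 μ2 d k (l+1))
      (fun k hk h1 h2 h3 => by
        show π k * dcGen n m lam μ1 μ2 d k (l+1) = 0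
        unfold dcGen
        rw [if_neg (by omega), if_neg (by omega), if_neg (by omega), mul_zero])] at h0
    unfold dcGen at h0
    rw [if_pos rfl] at h0
    rw [if_neg (by omega), if_neg (by omega), if_pos rfl, if_pos (by omega)] at h0
    rw [if_neg (by omega), if_pos (by omega)] at h0
    linarith

lemma dcStationary_pos (n m : ℕ) (hn : 1 ≤ n) (hm : 1 ≤ m)
    (lam μ1 μ2 : ℝ) (hlam : 0 < lam) (hμ1 : 0 < μ1) (hμ2 : 0 < μ2)
    (d : ℕ → ℕ) (π : ℕ → ℝ) (hπ : dcStationary n m lam μ1 μ2 d π) :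
    ∀ k, k ≤ n + m → 0 < π k := by
  have cut := dcStationary_cut n m hn hm lam μ1 μ2 hlam hμ1 hμ2 d π hπ
  have hπ0 : 0 < π 0 := by
    rcases (hπ.2.2 0 (by simp)).lt_or_eq with h | h
    · exact h
    · exfalso
      have hz : ∀ k, k ≤ n + m → π k = 0 := by
        intro k
        induction k with
        | zero => intro _; exact h.symm
        | succ k ih =>
          intro hk
          have hc := cut k (by omega)
          rw [ih (by omega)] at hc
          have hD := dcDeath_pos n hn μ1 μ2 hμ1 hμ2 d (k+1) (by omega)
          have := hc
          simp at this
          rcases this with h1 | h1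
          · exact h1
          · exact absurd h1 (ne_of_gt hD)
      have hsum := hπ.2.1
      rw [Finset.sum_eq_zero (fun k hk => hz k (by simp at hk; omega))] at hsum
      norm_num at hsum
  intro k
  induction k with
  | zero => intro _; exact hπ0
  | succ k ih =>
    intro hk
    have hc := cut k (by omega)
    have hD := dcDeath_pos n hn μ1 μ2 hμ1 hμ2 d (k+1) (by omega)
    have hp := ih (by omega)
    nlinarith

lemma dcGen_up (n m : ℕ) (lam μ1 μ2 : ℝ) (d : ℕ → ℕ) (k l : ℕ) (h : l = k + 1) :
    dcGen n m lam μ1 μ2 d k l = lam := by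
  unfold dcGen; rw [if_pos h]

lemma dcGen_down (n m : ℕ) (lam μ1 μ2 : ℝ) (d : ℕ → ℕ) (k l : ℕ) (h : l + 1 = k) :
    dcGen n m lam μ1 μ2 d k l = dcDeath n μ1 μ2 d k := by
  unfold dcGen; rw [if_neg (by omega), if_pos h]

lemma dcGen_diag (n m : ℕ) (lam μ1 μ2 : ℝ) (d : ℕ → ℕ) (k : ℕ) :
    dcGen n m lam μ1 μ2 d k k
      = -((if k < n + m then lam else 0) + dcDeath n μ1 μ2 d k) := by
  unfold dcGen; rw [if_neg (by omega), if_neg (by omega), if_pos rfl]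

lemma dcGen_far (n m : ℕ) (lam μ1 μ2 : ℝ) (d : ℕ → ℕ) (k l : ℕ)
    (h1 : l ≠ k + 1) (h2 : l + 1 ≠ k) (h3 : l ≠ k) :
    dcGen n m lam μ1 μ2 d k l = 0 := by
  unfold dcGen; rw [if_neg h1, if_neg h2, if_neg h3]

lemma perf_diff (n m : ℕ) (hn : 1 ≤ n) (hm : 1 ≤ m)
    (lam μ1 μ2 R P1W P2W P2S C1 C21 C22 C3 C4 : ℝ) (hμ2 : 0 < μ2)
    (j0 : ℕ) (hj1 : 1 ≤ j0) (hj2 : j0 ≤ m)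
    (dA dB : ℕ → ℕ) (hagree : ∀ j, j ≠ j0 → dA j = dB j)
    (hAle : dA j0 ≤ j0) (hBle : dB j0 ≤ j0)
    (fA fB : ℕ → ℝ)
    (hfA : fA = dcReward n m lam μ1 μ2 R P1W P2W P2S C1 C21 C22 C3 C4 dA)
    (hfB : fB = dcReward n m lam μ1 μ2 R P1W P2W P2S C1 C21 C22 C3 C4 dB)
    (πB : ℕ → ℝ) (hπB : dcStationary n m lam μ1 μ2 dB πB)
    (ηA ηB : ℝ) (hηB : ηB = ∑ k ∈ Finset.range (n + m + 1), πB k * fB k)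
    (gA : ℕ → ℝ) (hgA : dcPoisson n m lam μ1 μ2 dA fA ηA gA)
    (c : ℝ) (hc : c = R - (P2W - P2S) * C1 / μ2) :
    ηB - ηA = μ2 * ((dB j0 : ℝ) - (dA j0 : ℝ)) * πB (n + j0) *
      ((gA (n + j0 - 1) - gA (n + j0)) + c) := by
  have hk0 : n + j0 < n + m + 1 := by omega
  -- generator rows agree away from n+j0
  have hdeathEq : ∀ k, k ≠ n + j0 →
      dcDeath n μ1 μ2 dA k = dcDeath n μ1 μ2 dB k := by
    intro k hk
    unfold dcDeath
    split
    · rfl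
    · rename_i h
      rw [hagree (k - n) (by omega)]
  have hgenEq : ∀ k l, k ≠ n + j0 →
      dcGen n m lam μ1 μ2 dA k l = dcGen n m lam μ1 μ2 dB k l := by
    intro k l hk
    unfold dcGen
    rw [hdeathEq k hk]
  have hrewEq : ∀ k, k ≠ n + j0 → fA k = fB k := by
    intro k hk
    rw [hfA, hfB]
    unfold dcReward
    split
    · rfl
    · rename_i h
      rw [hagree (k - n) (by omega)]
  -- h2 : πB annihilates the dB generator applied to gA
  have h2 : ∑ l ∈ Finset.range (n+m+1), πB l *
      ∑ k ∈ Finset.range (n+m+1), dcGen n m lam μ1 μ2 dB l k * gA k = 0 := by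
    rw [Finset.sum_congr rfl (fun l _ => Finset.mul_sum (Finset.range (n+m+1))
      (fun k => dcGen n m lam μ1 μ2 dB l k * gA k) (πB l))]
    rw [Finset.sum_comm]
    apply Finset.sum_eq_zero
    intro k hk
    have hcol : ∑ l ∈ Finset.range (n+m+1),
        πB l * (dcGen n m lam μ1 μ2 dB l k * gA k)
        = (∑ l ∈ Finset.range (n+m+1), πB l * dcGen n m lam μ1 μ2 dB l k) * gA k := by
      rw [Finset.sum_mul]
      exact Finset.sum_congr rfl (fun l _ => by ring)
    rw [hcol, hπB.1 k hk, zero_mul]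
  -- h1 : Poisson equation summed against πB
  have h1 : ∑ l ∈ Finset.range (n+m+1), πB l *
      ∑ k ∈ Finset.range (n+m+1), dcGen n m lam μ1 μ2 dA l k * gA k
      = ηA - ∑ l ∈ Finset.range (n+m+1), πB l * fA l := by
    rw [Finset.sum_congr rfl (fun l hl => by rw [hgA l hl, mul_sub])]
    rw [Finset.sum_sub_distrib, ← Finset.sum_mul, hπB.2.1, one_mul]
  -- hdiff : the difference sum
  have hdiff : ∑ l ∈ Finset.range (n+m+1), πB l *
      ∑ k ∈ Finset.range (n+m+1),
        (dcGen n m lam μ1 μ2 dB l k - dcGen n m lam μ1 μ2 dA l k) * gA k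
      = (∑ l ∈ Finset.range (n+m+1), πB l * fA l) - ηA := by
    have expand : ∀ l ∈ Finset.range (n+m+1), πB l *
        ∑ k ∈ Finset.range (n+m+1),
          (dcGen n m lam μ1 μ2 dB l k - dcGen n m lam μ1 μ2 dA l k) * gA k
        = πB l * ∑ k ∈ Finset.range (n+m+1), dcGen n m lam μ1 μ2 dB l k * gA k
          - πB l * ∑ k ∈ Finset.range (n+m+1), dcGen n m lam μ1 μ2 dA l k * gA k := by
      intro l _
      have hin : ∑ k ∈ Finset.range (n+m+1),
          (dcGen n m lam μ1 μ2 dB l k - dcGen n m lam μ1 μ2 dA l k) * gA k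
          = ∑ k ∈ Finset.range (n+m+1), dcGen n m lam μ1 μ2 dB l k * gA k
            - ∑ k ∈ Finset.range (n+m+1), dcGen n m lam μ1 μ2 dA l k * gA k := by
        rw [← Finset.sum_sub_distrib]
        exact Finset.sum_congr rfl (fun k _ => by ring)
      rw [hin, mul_sub]
    rw [Finset.sum_congr rfl expand, Finset.sum_sub_distrib, h2, h1]
    ring
  -- collapse to the single row n+j0
  have hcol : ∑ l ∈ Finset.range (n+m+1), πB l *
      ∑ k ∈ Finset.range (n+m+1),
        (dcGen n m lam μ1 μ2 dB l k - dcGen n m lam μ1 μ2 dA l k) * gA k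
      = πB (n+j0) * ∑ k ∈ Finset.range (n+m+1),
        (dcGen n m lam μ1 μ2 dB (n+j0) k - dcGen n m lam μ1 μ2 dA (n+j0) k) * gA k := by
    apply sum_range_single _ _ hk0
    intro l _ hne
    rw [Finset.sum_eq_zero (fun k _ => by rw [hgenEq l k hne, sub_self, zero_mul]), mul_zero]
  -- the single-row sum
  have hrow : ∑ k ∈ Finset.range (n+m+1),
      (dcGen n m lam μ1 μ2 dB (n+j0) k - dcGen n m lam μ1 μ2 dA (n+j0) k) * gA k
      = (dcDeath n μ1 μ2 dB (n+j0) - dcDeath n μ1 μ2 dA (n+j0))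
        * (gA (n+j0-1) - gA (n+j0)) := by
    rw [sum_range_pair (n+m+1) (n+j0-1) (n+j0) (by omega) (by omega) hk0 _
      (fun k hk hk1 hk2 => by
        show (dcGen n m lam μ1 μ2 dB (n+j0) k - dcGen n m lam μ1 μ2 dA (n+j0) k) * gA k = 0
        by_cases hup : k = (n+j0) + 1
        · rw [dcGen_up n m lam μ1 μ2 dB _ _ hup, dcGen_up n m lam μ1 μ2 dA _ _ hup,
            sub_self, zero_mul]
        · rw [dcGen_far n m lam μ1 μ2 dB _ _ hup (by omega) (by omega),
            dcGen_far n m lam μ1 μ2 dA _ _ hup (by omega) (by omega),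
            sub_self, zero_mul])]
    rw [dcGen_down n m lam μ1 μ2 dB (n+j0) (n+j0-1) (by omega),
      dcGen_down n m lam μ1 μ2 dA (n+j0) (n+j0-1) (by omega),
      dcGen_diag n m lam μ1 μ2 dB (n+j0), dcGen_diag n m lam μ1 μ2 dA (n+j0)]
    ring
  -- death-rate difference
  have hcast : ((n + j0 : ℕ) : ℝ) - (n : ℝ) = (j0 : ℝ) := by push_cast; ring
  have hDdiff : dcDeath n μ1 μ2 dB (n+j0) - dcDeath n μ1 μ2 dA (n+j0)
      = ((dB j0 : ℝ) - (dA j0 : ℝ)) * μ2 := by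
    unfold dcDeath
    rw [if_neg (by omega), if_neg (by omega)]
    simp only [Nat.add_sub_cancel_left]
    rw [hcast, min_eq_left (by exact_mod_cast hBle), min_eq_left (by exact_mod_cast hAle)]
    ring
  -- reward difference
  have hfval : ∀ (dd : ℕ → ℕ), dd j0 ≤ j0 →
      dcReward n m lam μ1 μ2 R P1W P2W P2S C1 C21 C22 C3 C4 dd (n+j0)
      = R * ((n:ℝ) * μ1 + (dd j0 : ℝ) * μ2)
        - ((n:ℝ)*P1W + (dd j0:ℝ)*P2W + ((m:ℝ) - (dd j0:ℝ))*P2S)*C1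
        - ((n:ℝ)*C21 + (j0:ℝ)*C22) - (n:ℝ)*μ1*C3
        - (if j0 = m then lam*C4 else 0) := by
    intro dd hdd
    unfold dcReward
    rw [if_neg (by omega)]
    simp only [Nat.add_sub_cancel_left]
    rw [hcast, min_eq_right (by exact_mod_cast hdd)]
  have hfdiff : fB (n+j0) - fA (n+j0) = ((dB j0 : ℝ) - (dA j0 : ℝ)) * μ2 * c := by
    rw [hfA, hfB, hfval dB hBle, hfval dA hAle, hc]
    have hμ2' : μ2 ≠ 0 := ne_of_gt hμ2
    field_simp
    ring
  -- reward sum difference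
  have hfsum : (∑ l ∈ Finset.range (n+m+1), πB l * fB l)
      - ∑ l ∈ Finset.range (n+m+1), πB l * fA l
      = πB (n+j0) * (fB (n+j0) - fA (n+j0)) := by
    rw [← Finset.sum_sub_distrib]
    rw [sum_range_single (n+m+1) (n+j0) hk0
      (fun l => πB l * fB l - πB l * fA l)
      (fun l _ hne => by
        show πB l * fB l - πB l * fA l = 0
        rw [hrewEq l hne]; ring)]
    ring
  have h5 : (∑ l ∈ Finset.range (n+m+1), πB l * fA l) - ηA
      = πB (n+j0) * (((dB j0 : ℝ) - (dA j0 : ℝ)) * μ2 * (gA (n+j0-1) - gA (n+j0))) := by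
    rw [← hdiff, hcol, hrow, hDdiff]
  rw [hηB]
  linear_combination h5 + hfsum + πB (n+j0) * hfdiff
/-- sign conservation equation: for two policies agreeing except
at `j0` (both values in `{0,...,j0}`, distinct),
`π^{(d')}(n,j0)[G^{(d)}(n,j0)+c] = π^{(d)}(n,j0)[G^{(d')}(n,j0)+c]`, and the two
bracketed quantities have the same sign: if `G^{(d')}(n,j0)+c ≠ 0` then their
ratio equals `π^{(d)}(n,j0)/π^{(d')}(n,j0) > 0`. -/
theorem stmt10 (n m : ℕ) (hn : 1 ≤ n) (hm : 1 ≤ m)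
    (lam μ1 μ2 R P1W P2W P2S C1 C21 C22 C3 C4 : ℝ)
    (hlam : 0 < lam) (hμ1 : 0 < μ1) (hμ2 : 0 < μ2)
    (hP2S : 0 < P2S) (hP : P2S < P2W) (hC1 : 0 < C1)
    (j0 : ℕ) (hj1 : 1 ≤ j0) (hj2 : j0 ≤ m)
    (d d' : ℕ → ℕ) (hd : ∀ j, d j ≤ m) (hd' : ∀ j, d' j ≤ m)
    (hagree : ∀ j, j ≠ j0 → d j = d' j)
    (hdle : d j0 ≤ j0) (hd'le : d' j0 ≤ j0) (hne : d j0 ≠ d' j0)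
    (π π' : ℕ → ℝ)
    (hπ : dcStationary n m lam μ1 μ2 d π)
    (hπ' : dcStationary n m lam μ1 μ2 d' π')
    (η η' : ℝ)
    (hη : η = ∑ k ∈ Finset.range (n + m + 1),
      π k * dcReward n m lam μ1 μ2 R P1W P2W P2S C1 C21 C22 C3 C4 d k)
    (hη' : η' = ∑ k ∈ Finset.range (n + m + 1),
      π' k * dcReward n m lam μ1 μ2 R P1W P2W P2S C1 C21 C22 C3 C4 d' k)
    (g g' : ℕ → ℝ)
    (hg : dcPoisson n m lam μ1 μ2 d
      (dcReward n m lam μ1 μ2 R P1W P2W P2S C1 C21 C22 C3 C4 d) η g)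
    (hg' : dcPoisson n m lam μ1 μ2 d'
      (dcReward n m lam μ1 μ2 R P1W P2W P2S C1 C21 C22 C3 C4 d') η' g')
    (c : ℝ) (hc : c = R - (P2W - P2S) * C1 / μ2) :
    π' (n + j0) * ((g (n + j0 - 1) - g (n + j0)) + c)
        = π (n + j0) * ((g' (n + j0 - 1) - g' (n + j0)) + c) ∧
    ((g' (n + j0 - 1) - g' (n + j0)) + c ≠ 0 →
      ((g (n + j0 - 1) - g (n + j0)) + c) / ((g' (n + j0 - 1) - g' (n + j0)) + c)
          = π (n + j0) / π' (n + j0) ∧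
      0 < ((g (n + j0 - 1) - g (n + j0)) + c)
          / ((g' (n + j0 - 1) - g' (n + j0)) + c)) := by

  have e1 := perf_diff n m hn hm lam μ1 μ2 R P1W P2W P2S C1 C21 C22 C3 C4 hμ2
    j0 hj1 hj2 d d' hagree hdle hd'le _ _ rfl rfl π' hπ' η η' hη' g hg c hc
  have e2 := perf_diff n m hn hm lam μ1 μ2 R P1W P2W P2S C1 C21 C22 C3 C4 hμ2
    j0 hj1 hj2 d' d (fun j hj => (hagree j hj).symm) hd'le hdle _ _ rfl rfl
    π hπ η' η hη g' hg' c hc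
  have hΔ : ((d' j0 : ℝ) - (d j0 : ℝ)) ≠ 0 :=
    sub_ne_zero.2 (by exact_mod_cast (Ne.symm hne))
  have key : π' (n + j0) * ((g (n + j0 - 1) - g (n + j0)) + c)
      = π (n + j0) * ((g' (n + j0 - 1) - g' (n + j0)) + c) := by
    have hsum0 : (μ2 * ((d' j0 : ℝ) - (d j0 : ℝ))) *
        (π' (n + j0) * ((g (n + j0 - 1) - g (n + j0)) + c)
          - π (n + j0) * ((g' (n + j0 - 1) - g' (n + j0)) + c)) = 0 := by
      linear_combination -e1 - e2
    rcases mul_eq_zero.1 hsum0 with h | h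
    · exact absurd h (mul_ne_zero (ne_of_gt hμ2) hΔ)
    · linarith [sub_eq_zero.1 h]
  have hp : 0 < π (n + j0) :=
    dcStationary_pos n m hn hm lam μ1 μ2 hlam hμ1 hμ2 d π hπ (n + j0) (by omega)
  have hp' : 0 < π' (n + j0) :=
    dcStationary_pos n m hn hm lam μ1 μ2 hlam hμ1 hμ2 d' π' hπ' (n + j0) (by omega)
  refine ⟨key, fun h0 => ?_⟩
  have hr : ((g (n + j0 - 1) - g (n + j0)) + c) / ((g' (n + j0 - 1) - g' (n + j0)) + c)
      = π (n + j0) / π' (n + j0) := by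
    rw [div_eq_div_iff h0 (ne_of_gt hp')]
    linear_combination key
  exact ⟨hr, hr ▸ div_pos hp hp'⟩
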